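/- Let N and n be positive natural numbers and let Ψ be a real symmetric positive definite matrix indexed by Fin N × Fin n that is block tridiagonal, with blocks labelled 1,…,N. Write ν₂(i) for the 2-adic valuation of i, and define the nested-dissection order ≼ on block labels by: r ≼ c iff ν₂(r) < ν₂(c), or ν₂(r) = ν₂(c) and r ≤ c. Then there exists a matrix L indexed by Fin N × Fin n such that: (i) L((i,a),(j,b)) = 0 whenever the block label of (i,a) strictly precedes that of (j,b) in ≼, or the block labels are equal and a < b (L is lower triangular with respect to the nested-dissection ordering); (ii) every diagonal entry of L is strictly positive; (iii) L · Lᵀ = Ψ; and (iv) for block labels r ≠ c with c strictly preceding r in ≼, the block L(r,c) is the zero block unless r = c + 2^{ν₂(c)} or r = c − 2^{ν₂(c)}. That is, in the multi-stage permuted factorization, each column at stage s = 2^{ν₂(c)} has nonzero off-diagonal blocks only in the rows of its two neighbours c − s and c + s. -/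

import Mathlib

open Matrix

/-- The nested-dissection (multi-stage permutation) order on block labels `1,…,N`:
`r ≼ c` iff `ν₂(r) < ν₂(c)`, or `ν₂(r) = ν₂(c)` and `r ≤ c`, where `ν₂` is the 2-adic
valuation `padicValNat 2`. -/
def nestedDissectionLe (r c : ℕ) : Prop :=
  padicValNat 2 r < padicValNat 2 c ∨ (padicValNat 2 r = padicValNat 2 c ∧ r ≤ c)

/-- The allowed sparsity pattern: `r` and `c` are equal or differ by the elimination
step of one of them. -/
def PadjL (r c : ℕ) : Prop :=
  r = c ∨ r = c + 2 ^ padicValNat 2 c ∨ r + 2 ^ padicValNat 2 c = c ∨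
    c = r + 2 ^ padicValNat 2 r ∨ c + 2 ^ padicValNat 2 r = r

lemma padjL_refl (r : ℕ) : PadjL r r := Or.inl rfl

lemma padjL_symm {r c : ℕ} (h : PadjL r c) : PadjL c r := by
  rcases h with h | h | h | h | h
  · exact Or.inl h.symm
  · exact Or.inr (Or.inr (Or.inr (Or.inl h)))
  · exact Or.inr (Or.inr (Or.inr (Or.inr h)))
  · exact Or.inr (Or.inl h)
  · exact Or.inr (Or.inr (Or.inl h))

lemma odd_decomp {a : ℕ} (ha : 0 < a) : ∃ m, Odd m ∧ a = 2 ^ padicValNat 2 a * m := by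
  haveI : Fact (Nat.Prime 2) := ⟨Nat.prime_two⟩
  refine ⟨a / 2 ^ padicValNat 2 a, ?_, (Nat.mul_div_cancel' pow_padicValNat_dvd).symm⟩
  rcases Nat.even_or_odd (a / 2 ^ padicValNat 2 a) with he | ho
  · exfalso
    obtain ⟨t, ht⟩ := he
    set v := padicValNat 2 a with hv
    have hself : a = 2 ^ v * (a / 2 ^ v) :=
      (Nat.mul_div_cancel' pow_padicValNat_dvd).symm
    have hdvd : 2 ^ (v + 1) ∣ a := by
      refine ⟨t, ?_⟩
      calc a = 2 ^ v * (a / 2 ^ v) := hself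
      _ = 2 ^ v * (t + t) := by rw [ht]
      _ = 2 ^ (v + 1) * t := by ring
    exact pow_succ_padicValNat_not_dvd ha.ne' hdvd
  · exact ho

lemma val_two_pow_mul (t : ℕ) {m : ℕ} (hm : Odd m) : padicValNat 2 (2 ^ t * m) = t := by
  haveI : Fact (Nat.Prime 2) := ⟨Nat.prime_two⟩
  have hm0 : m ≠ 0 := by
    rintro rfl
    simp [Nat.odd_iff] at hm
  have hnd : ¬ (2 ∣ m) := by
    have := Nat.odd_iff.mp hm
    omega
  rw [padicValNat.mul (pow_ne_zero t two_ne_zero) hm0, padicValNat.prime_pow,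
    padicValNat.eq_zero_of_not_dvd hnd, add_zero]

lemma val_step {a b : ℕ} (ha : 0 < a) (hb : 0 < b)
    (h : b = a + 2 ^ padicValNat 2 a ∨ b + 2 ^ padicValNat 2 a = a) :
    padicValNat 2 a < padicValNat 2 b := by
  haveI : Fact (Nat.Prime 2) := ⟨Nat.prime_two⟩
  obtain ⟨m, hm, hae⟩ := odd_decomp ha
  obtain ⟨t, ht⟩ := hm
  set v := padicValNat 2 a with hv
  have hdvd : 2 ^ (v + 1) ∣ b := by
    rcases h with h | h
    · exact ⟨t + 1, by rw [h, hae, ht]; ring⟩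
    · refine ⟨t, ?_⟩
      have h1 : b + 2 ^ v = 2 ^ (v + 1) * t + 2 ^ v := by
        rw [h, hae, ht]; ring
      omega
  have := (padicValNat_dvd_iff_le hb.ne').mp hdvd
  omega

lemma padj_core {r c k : ℕ} (hc : 0 < c) (hk : 0 < k)
    (h : r = k + 2 ^ padicValNat 2 k) (g : c + 2 ^ padicValNat 2 k = k) : PadjL r c := by
  obtain ⟨m, hm, hke⟩ := odd_decomp hk
  obtain ⟨t, ht⟩ := hm
  set v := padicValNat 2 k with hv
  have hc2 : c = 2 ^ (v + 1) * t := by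
    have h1 : c + 2 ^ v = 2 ^ (v + 1) * t + 2 ^ v := by rw [g, hke, ht]; ring
    omega
  have hr2 : r = 2 ^ (v + 1) * (t + 1) := by rw [h, hke, ht]; ring
  rcases Nat.even_or_odd t with he | ho
  · have hvr : padicValNat 2 r = v + 1 := by rw [hr2]; exact val_two_pow_mul _ (Even.add_one he)
    refine Or.inr (Or.inr (Or.inr (Or.inr ?_)))
    rw [hvr, hc2, hr2]; ring
  · have hvc : padicValNat 2 c = v + 1 := by rw [hc2]; exact val_two_pow_mul _ ho
    refine Or.inr (Or.inl ?_)
    rw [hvc, hc2, hr2]; ring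

lemma not_ndLe_of_val_lt {a b : ℕ} (h : padicValNat 2 b < padicValNat 2 a) :
    ¬ nestedDissectionLe a b := by
  rintro (h1 | ⟨h2, _⟩) <;> omega

lemma padjL_reduce {r k : ℕ} (hr : 0 < r) (hk : 0 < k)
    (h1 : nestedDissectionLe k r) (h1' : k ≠ r) (p1 : PadjL r k) :
    r = k + 2 ^ padicValNat 2 k ∨ r + 2 ^ padicValNat 2 k = k := by
  rcases p1 with h | h | h | h | h
  · exact absurd h.symm h1'
  · exact Or.inl h
  · exact Or.inr h
  · exact absurd h1 (not_ndLe_of_val_lt (val_step hr hk (Or.inl h)))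
  · exact absurd h1 (not_ndLe_of_val_lt (val_step hr hk (Or.inr h)))

lemma padj_close {r c k : ℕ} (hr : 0 < r) (hc : 0 < c) (hk : 0 < k)
    (h1 : nestedDissectionLe k r) (h1' : k ≠ r)
    (h2 : nestedDissectionLe k c) (h2' : k ≠ c)
    (p1 : PadjL r k) (p2 : PadjL c k) : PadjL r c := by
  rcases padjL_reduce hr hk h1 h1' p1 with h | h <;>
    rcases padjL_reduce hc hk h2 h2' p2 with g | g
  · exact Or.inl (h.trans g.symm)
  · exact padj_core hc hk h g
  · exact padjL_symm (padj_core hr hk g h)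
  · exact Or.inl (by omega)

lemma padj_succ (c : ℕ) (hc : 0 < c) : PadjL (c + 1) c := by
  rcases Nat.even_or_odd c with he | ho
  · have h1 : padicValNat 2 (c + 1) = 0 := by
      apply padicValNat.eq_zero_of_not_dvd
      rcases he with ⟨t, ht⟩
      omega
    exact Or.inr (Or.inr (Or.inr (Or.inr (by rw [h1]; ring))))
  · have h1 : padicValNat 2 c = 0 := by
      apply padicValNat.eq_zero_of_not_dvd
      rcases ho with ⟨t, ht⟩
      omega
    exact Or.inr (Or.inl (by rw [h1]; ring))

lemma wkey {K a1 a2 s1 s2 : ℕ} (h1 : s1 < K) (h2 : s2 < K) :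
    a1 * K + s1 < a2 * K + s2 ↔ a1 < a2 ∨ (a1 = a2 ∧ s1 < s2) := by
  constructor
  · intro h
    rcases lt_trichotomy a1 a2 with h' | h' | h'
    · exact Or.inl h'
    · subst h'; exact Or.inr ⟨rfl, by omega⟩
    · exfalso
      have hm : (a2 + 1) * K ≤ a1 * K := Nat.mul_le_mul_right K h'
      have he : (a2 + 1) * K = a2 * K + K := by ring
      omega
  · rintro (h | ⟨rfl, h⟩)
    · have hm : (a1 + 1) * K ≤ a2 * K := Nat.mul_le_mul_right K h
      have he : (a1 + 1) * K = a1 * K + K := by ring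
      omega
    · omega

theorem cholFin : ∀ (k : ℕ) (M : Matrix (Fin k) (Fin k) ℝ), M.PosDef → M.IsSymm →
    ∀ (P : Fin k → Fin k → Prop), (∀ x, P x x) →
    (∀ x y, M x y ≠ 0 → P x y) →
    (∀ x y z, z < x → z < y → P x z → P y z → P x y) →
    ∃ L : Matrix (Fin k) (Fin k) ℝ,
      (∀ x y, x < y → L x y = 0) ∧ (∀ x, 0 < L x x) ∧ L * Lᵀ = M ∧
      (∀ x y, ¬ P x y → L x y = 0) := by
  intro k
  induction k with
  | zero =>
    intro M _ _ P _ _ _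
    exact ⟨0, fun x => x.elim0, fun x => x.elim0, Matrix.ext fun x => x.elim0,
      fun x => x.elim0⟩
  | succ k ih =>
    intro M hpd hsym P hrefl hM hclose
    have hMsym : ∀ p q, M p q = M q p := by
      intro p q
      have := congrFun (congrFun hsym q) p
      simpa [Matrix.transpose_apply] using this
    set α := M 0 0 with hαdef
    have hα0 : 0 < α := by
      have h := hpd.dotProduct_mulVec_pos (x := Pi.single 0 1) (by
        intro h
        have := congrFun h 0
        simp at this)
      simpa [mulVec_single, single_dotProduct] using h
    have hαne : α ≠ 0 := ne_of_gt hα0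
    set b : Fin k → ℝ := fun r => M r.succ 0 with hbdef
    set S : Matrix (Fin k) (Fin k) ℝ :=
      fun r c => M r.succ c.succ - b r * b c / α with hSdef
    -- quadratic form identity
    have key : ∀ x : Fin k → ℝ,
        x ⬝ᵥ (S *ᵥ x) =
          (Fin.cons (-(b ⬝ᵥ x) / α) x : Fin (k+1) → ℝ) ⬝ᵥ
            (M *ᵥ (Fin.cons (-(b ⬝ᵥ x) / α) x)) := by
      intro x
      set t : ℝ := -(b ⬝ᵥ x) / α with htdef
      have hB : (b ⬝ᵥ x) = ∑ r, b r * x r := rfl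
      simp only [dotProduct, mulVec, Fin.sum_univ_succ, Fin.cons_zero, Fin.cons_succ, hSdef]
      have h0q : ∀ q : Fin k, M 0 q.succ = b q := fun q => hMsym 0 q.succ
      simp only [h0q, sub_mul, Finset.sum_sub_distrib, mul_add, mul_sub,
        Finset.sum_add_distrib]
      have e1 : ∑ r, ∑ c, x r * (b r * b c / α * x c)
          = (∑ r, b r * x r) * (∑ c, b c * x c) / α := by
        rw [Finset.sum_mul_sum ]
        rw [Finset.sum_div]
        refine Finset.sum_congr rfl fun r _ => ?_
        rw [Finset.sum_div]
        refine Finset.sum_congr rfl fun c _ => ?_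
        ring
      have e2 : ∑ r, x r * (M r.succ 0 * t) = t * ∑ r, b r * x r := by
        rw [Finset.mul_sum]
        refine Finset.sum_congr rfl fun r _ => ?_
        simp only [hbdef]
        ring
      rw [e2]
      have e1' : ∑ r : Fin k, x r * ∑ c : Fin k, b r * b c / α * x c
          = ((∑ r : Fin k, b r * x r) * ∑ c : Fin k, b c * x c) / α := by
        rw [← e1]
        exact Finset.sum_congr rfl fun r _ => (Finset.mul_sum _ _ _)
      rw [e1', ← hαdef, htdef, hB]
      field_simp
      ring
    -- S is positive definite
    have hSsym : ∀ r c, S r c = S c r := by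
      intro r c
      simp only [hSdef, hMsym r.succ c.succ]
      ring
    have hSpd : S.PosDef := by
      refine Matrix.PosDef.of_dotProduct_mulVec_pos ?_ ?_
      · ext r c
        simp only [conjTranspose_apply, star_trivial, hSsym r c]
      · intro x hx
        have hy : (Fin.cons (-(b ⬝ᵥ x) / α) x : Fin (k+1) → ℝ) ≠ 0 := by
          obtain ⟨r, hr⟩ := Function.ne_iff.mp hx
          intro h
          apply hr
          have := congrFun h r.succ
          simpa using this
        have h := hpd.dotProduct_mulVec_pos hy
        have hstar : star (Fin.cons (-(b ⬝ᵥ x) / α) x : Fin (k+1) → ℝ) = Fin.cons (-(b ⬝ᵥ x) / α) x := funext fun i => star_trivial _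
        rw [hstar] at h
        have hsx : star x = x := funext fun i => star_trivial _
        rw [hsx, key x]
        exact h
    -- apply induction hypothesis
    obtain ⟨L', hL1, hL2, hL3, hL4⟩ := ih S hSpd
      (by ext r c; simp only [transpose_apply, hSsym r c])
      (fun r c => P r.succ c.succ) (fun r => hrefl r.succ)
      (by
        intro r c h
        simp only [hSdef] at h
        by_cases hM1 : M r.succ c.succ = 0
        · rw [hM1] at h
          have hbr : b r ≠ 0 := by
            intro hb; apply h; rw [hb]; ring
          have hbc : b c ≠ 0 := by
            intro hb; apply h; rw [hb]; ring
          exact hclose r.succ c.succ 0 r.succ_pos c.succ_pos (hM _ _ hbr) (hM _ _ hbc)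
        · exact hM _ _ hM1)
      (fun r c z hzr hzc h1 h2 =>
        hclose r.succ c.succ z.succ (Fin.succ_lt_succ_iff.mpr hzr)
          (Fin.succ_lt_succ_iff.mpr hzc) h1 h2)
    set sa : ℝ := Real.sqrt α with hsadef
    have hsa0 : 0 < sa := Real.sqrt_pos.mpr hα0
    have hsane : sa ≠ 0 := ne_of_gt hsa0
    have hsasa : sa * sa = α := Real.mul_self_sqrt hα0.le
    set L : Matrix (Fin (k+1)) (Fin (k+1)) ℝ := fun p q =>
      Fin.cases (Fin.cases sa (fun _ => 0) q)
        (fun r => Fin.cases (b r / sa) (fun c => L' r c) q) p with hLdef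
    have L00 : L 0 0 = sa := rfl
    have L0s : ∀ c : Fin k, L 0 c.succ = 0 := fun c => rfl
    have Ls0 : ∀ r : Fin k, L r.succ 0 = b r / sa := fun r => rfl
    have Lss : ∀ r c : Fin k, L r.succ c.succ = L' r c := fun r c => rfl
    refine ⟨L, ?_, ?_, ?_, ?_⟩
    · intro p q
      refine Fin.cases ?_ (fun r => ?_) p
      · refine Fin.cases ?_ (fun c => ?_) q
        · intro h; exact absurd h (lt_irrefl _)
        · intro _; exact L0s c
      · refine Fin.cases ?_ (fun c => ?_) q
        · intro h; exact absurd h (Fin.not_lt_zero _)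
        · intro h
          rw [Lss]
          exact hL1 r c (Fin.succ_lt_succ_iff.mp h)
    · intro p
      refine Fin.cases ?_ (fun r => ?_) p
      · rw [L00]; exact hsa0
      · rw [Lss]; exact hL2 r
    · ext p q
      have hmul : (L * Lᵀ) p q = ∑ z, L p z * L q z := by
        simp [Matrix.mul_apply, transpose_apply]
      rw [hmul]
      refine Fin.cases ?_ (fun r => ?_) p
      · refine Fin.cases ?_ (fun c => ?_) q
        · rw [Fin.sum_univ_succ]
          simp only [L00, L0s]
          simp [hsasa]
          rfl
        · rw [Fin.sum_univ_succ]
          simp only [L00, L0s, Ls0]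
          rw [hMsym 0 c.succ]
          field_simp
          simp only [zero_mul, Finset.sum_const_zero, add_zero]
          rfl
      · refine Fin.cases ?_ (fun c => ?_) q
        · rw [Fin.sum_univ_succ]
          simp only [L00, L0s, Ls0]
          field_simp
          simp only [mul_zero, Finset.sum_const_zero, add_zero]
          rfl
        · rw [Fin.sum_univ_succ]
          simp only [L0s, Ls0, Lss]
          have h3 : ∑ z : Fin k, L' r z * L' c z = S r c := by
            have := congrFun (congrFun hL3 r) c
            rw [Matrix.mul_apply] at this
            simpa [transpose_apply] using this
          rw [h3]
          simp only [hSdef]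
          rw [div_mul_div_comm, hsasa]
          ring
    · intro p q
      refine Fin.cases ?_ (fun r => ?_) p
      · refine Fin.cases ?_ (fun c => ?_) q
        · intro hnp; exact absurd (hrefl 0) hnp
        · intro _; exact L0s c
      · refine Fin.cases ?_ (fun c => ?_) q
        · intro hnp
          rw [Ls0]
          have hz : M r.succ 0 = 0 := by
            by_contra h
            exact hnp (hM _ _ h)
          have hbz : b r = 0 := hz
          rw [hbz, zero_div]
        · intro hnp
          rw [Lss]
          exact hL4 r c hnp



theorem multi_stage_cholesky_fill_in (N n : ℕ) (hN : 0 < N) (hn : 0 < n)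
    (Ψ : Matrix (Fin N × Fin n) (Fin N × Fin n) ℝ) (hsym : Ψ.IsSymm) (hpd : Ψ.PosDef)
    (htri : ∀ (i j : Fin N) (a b : Fin n),
      ((i : ℕ) + 1 < (j : ℕ) ∨ (j : ℕ) + 1 < (i : ℕ)) → Ψ (i, a) (j, b) = 0) :
    ∃ L : Matrix (Fin N × Fin n) (Fin N × Fin n) ℝ,
      (∀ (i j : Fin N) (a b : Fin n),
        ((nestedDissectionLe ((i : ℕ) + 1) ((j : ℕ) + 1) ∧ (i : ℕ) + 1 ≠ (j : ℕ) + 1) ∨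
            (i = j ∧ (a : ℕ) < (b : ℕ))) →
          L (i, a) (j, b) = 0) ∧
      (∀ (i : Fin N) (a : Fin n), 0 < L (i, a) (i, a)) ∧
      L * Lᵀ = Ψ ∧
      (∀ i j : Fin N,
        (nestedDissectionLe ((j : ℕ) + 1) ((i : ℕ) + 1) ∧ (j : ℕ) + 1 ≠ (i : ℕ) + 1) →
        ¬((i : ℕ) + 1 = ((j : ℕ) + 1) + 2 ^ padicValNat 2 ((j : ℕ) + 1) ∨
            (i : ℕ) + 1 = ((j : ℕ) + 1) - 2 ^ padicValNat 2 ((j : ℕ) + 1)) →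
        ∀ (a b : Fin n), L (i, a) (j, b) = 0) := by
  classical
  set w : Fin N × Fin n → ℕ := fun p =>
    padicValNat 2 ((p.1 : ℕ) + 1) * (N * n) + ((p.1 : ℕ) * n + (p.2 : ℕ)) with hwdef
  have hsb : ∀ p : Fin N × Fin n, (p.1 : ℕ) * n + (p.2 : ℕ) < N * n := by
    intro p
    calc (p.1 : ℕ) * n + (p.2 : ℕ) < (p.1 : ℕ) * n + n := by
          have := p.2.isLt; omega
    _ = ((p.1 : ℕ) + 1) * n := by ring
    _ ≤ N * n := Nat.mul_le_mul_right n p.1.isLt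
  -- characterization of the order given by w
  have hwlt : ∀ p q : Fin N × Fin n, w p < w q ↔
      (padicValNat 2 ((p.1 : ℕ) + 1) < padicValNat 2 ((q.1 : ℕ) + 1) ∨
        (padicValNat 2 ((p.1 : ℕ) + 1) = padicValNat 2 ((q.1 : ℕ) + 1) ∧
          ((p.1 : ℕ) < (q.1 : ℕ) ∨ ((p.1 : ℕ) = (q.1 : ℕ) ∧ (p.2 : ℕ) < (q.2 : ℕ))))) := by
    intro p q
    rw [hwdef]
    simp only
    rw [wkey (hsb p) (hsb q)]
    constructor
    · rintro (h | ⟨h1, h2⟩)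
      · exact Or.inl h
      · refine Or.inr ⟨h1, ?_⟩
        rw [wkey p.2.isLt q.2.isLt] at h2
        exact h2
    · rintro (h | ⟨h1, h2⟩)
      · exact Or.inl h
      · refine Or.inr ⟨h1, ?_⟩
        rw [wkey p.2.isLt q.2.isLt]
        exact h2
  have winj : Function.Injective w := by
    intro p q h
    have h1 : ¬ w p < w q := by omega
    have h2 : ¬ w q < w p := by omega
    rw [hwlt] at h1 h2
    have : (p.1 : ℕ) = (q.1 : ℕ) ∧ (p.2 : ℕ) = (q.2 : ℕ) := by
      push_neg at h1 h2
      omega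
    ext
    · exact this.1
    · exact this.2
  -- the sorting equivalence
  set e₀ : Fin (N * n) ≃ Fin N × Fin n := finProdFinEquiv.symm with he₀
  set σ : Equiv.Perm (Fin (N * n)) := Tuple.sort (w ∘ e₀) with hσ
  set e : Fin (N * n) ≃ Fin N × Fin n := σ.trans e₀ with he
  have hmono : Monotone fun p => w (e p) := Tuple.monotone_sort (w ∘ e₀)
  have hsm : StrictMono fun p => w (e p) :=
    hmono.strictMono_of_injective (winj.comp e.injective)
  have hlt : ∀ p q : Fin (N * n), p < q ↔ w (e p) < w (e q) := fun p q => (hsm.lt_iff_lt).symm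
  -- transported matrix
  set M : Matrix (Fin (N * n)) (Fin (N * n)) ℝ := Ψ.submatrix e e with hM
  have hMapp : ∀ p q, M p q = Ψ (e p) (e q) := fun p q => rfl
  have hΨs : ∀ x y, Ψ x y = Ψ y x := by
    intro x y
    have := congrFun (congrFun hsym y) x
    simpa [Matrix.transpose_apply] using this
  have hMsym : M.IsSymm := by
    ext p q
    simp only [Matrix.transpose_apply, hMapp]
    exact hΨs (e q) (e p)
  have hMpd : M.PosDef := by
    refine Matrix.PosDef.of_dotProduct_mulVec_pos ?_ ?_
    · ext p q
      simp only [conjTranspose_apply, star_trivial, hMapp]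
      exact hΨs (e q) (e p)
    · intro x hx
      have hy : (x ∘ e.symm) ≠ 0 := by
        intro h
        apply hx
        ext p
        have := congrFun h (e p)
        simpa using this
      have h := hpd.dotProduct_mulVec_pos hy
      have hstar : ∀ (κ : Type) [Fintype κ] (v : κ → ℝ), star v = v := fun κ _ v =>
        funext fun i => star_trivial _
      rw [hstar] at h ⊢
      have hswap : x ⬝ᵥ (M *ᵥ x) = (x ∘ e.symm) ⬝ᵥ (Ψ *ᵥ (x ∘ e.symm)) := by
        rw [hM, submatrix_mulVec_equiv]
        calc ∑ p, x p * (Ψ *ᵥ (x ∘ e.symm)) (e p)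
            = ∑ p, ((x ∘ e.symm) (e p)) * (Ψ *ᵥ (x ∘ e.symm)) (e p) := by
              refine Finset.sum_congr rfl fun p _ => ?_
              simp
        _ = ∑ z, ((x ∘ e.symm) z) * (Ψ *ᵥ (x ∘ e.symm)) z :=
              Equiv.sum_comp e fun z => ((x ∘ e.symm) z) * (Ψ *ᵥ (x ∘ e.symm)) z
      rw [hswap]
      exact h
  -- the pattern
  set P : Fin (N * n) → Fin (N * n) → Prop := fun p q =>
    PadjL (((e p).1 : ℕ) + 1) (((e q).1 : ℕ) + 1) with hP
  obtain ⟨L', hL1, hL2, hL3, hL4⟩ := cholFin (N * n) M hMpd hMsym P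
    (fun p => padjL_refl _)
    (by
      intro p q h
      rw [hMapp] at h
      set i := (e p).1
      set a := (e p).2
      set j := (e q).1
      set b := (e q).2
      have hne : ¬ ((i : ℕ) + 1 < (j : ℕ) ∨ (j : ℕ) + 1 < (i : ℕ)) := by
        intro hc
        exact h (by rw [show e p = (i, a) from rfl, show e q = (j, b) from rfl]; exact htri i j a b hc)
      rw [hP]
      show PadjL ((i : ℕ) + 1) ((j : ℕ) + 1)
      have : (i : ℕ) = (j : ℕ) ∨ (i : ℕ) = (j : ℕ) + 1 ∨ (j : ℕ) = (i : ℕ) + 1 := by omega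
      rcases this with h' | h' | h'
      · rw [h']; exact padjL_refl _
      · rw [h']; exact padj_succ ((j : ℕ) + 1) (Nat.succ_pos _)
      · rw [h']; exact padjL_symm (padj_succ ((i : ℕ) + 1) (Nat.succ_pos _)))
    (by
      intro x y z hzx hzy pxz pyz
      rw [hlt] at hzx hzy
      rw [hwlt] at hzx hzy
      have pxz' : PadjL (((e x).1 : ℕ) + 1) (((e z).1 : ℕ) + 1) := pxz
      have pyz' : PadjL (((e y).1 : ℕ) + 1) (((e z).1 : ℕ) + 1) := pyz
      show PadjL (((e x).1 : ℕ) + 1) (((e y).1 : ℕ) + 1)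
      rcases eq_or_ne ((e z).1 : ℕ) ((e x).1 : ℕ) with hex | hex
      · rw [hex] at pyz'
        exact padjL_symm pyz'
      · rcases eq_or_ne ((e z).1 : ℕ) ((e y).1 : ℕ) with hey | hey
        · rw [hey] at pxz'
          exact pxz'
        · have hnd1 : nestedDissectionLe (((e z).1 : ℕ) + 1) (((e x).1 : ℕ) + 1) := by
            rcases hzx with h | ⟨h1, h2⟩
            · exact Or.inl h
            · exact Or.inr ⟨h1, by omega⟩
          have hnd2 : nestedDissectionLe (((e z).1 : ℕ) + 1) (((e y).1 : ℕ) + 1) := by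
            rcases hzy with h | ⟨h1, h2⟩
            · exact Or.inl h
            · exact Or.inr ⟨h1, by omega⟩
          exact padj_close (Nat.succ_pos _) (Nat.succ_pos _) (Nat.succ_pos _)
            hnd1 (by omega) hnd2 (by omega) pxz' pyz')
  -- transport back
  set L : Matrix (Fin N × Fin n) (Fin N × Fin n) ℝ := fun x y =>
    L' (e.symm x) (e.symm y) with hLdef
  have hwe : ∀ x : Fin N × Fin n, w (e (e.symm x)) = w x := fun x => by
    rw [e.apply_symm_apply]
  have hlt' : ∀ x y : Fin N × Fin n, w x < w y → e.symm x < e.symm y := by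
    intro x y h
    rw [hlt, hwe, hwe]
    exact h
  refine ⟨L, ?_, ?_, ?_, ?_⟩
  · intro i j a b h
    have hw : w (i, a) < w (j, b) := by
      rw [hwlt]
      dsimp only
      rcases h with ⟨hnd, hne⟩ | ⟨rfl, hab⟩
      · rcases hnd with h' | ⟨h1, h2⟩
        · exact Or.inl h'
        · exact Or.inr ⟨h1, Or.inl (by omega)⟩
      · exact Or.inr ⟨rfl, Or.inr ⟨rfl, hab⟩⟩
    exact hL1 _ _ (hlt' _ _ hw)
  · intro i a
    exact hL2 _
  · ext x y
    rw [Matrix.mul_apply]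
    have hterm : ∀ z, L x z * Lᵀ z y = L' (e.symm x) (e.symm z) * L' (e.symm y) (e.symm z) := by
      intro z
      rw [Matrix.transpose_apply, hLdef]
    calc ∑ z, L x z * Lᵀ z y
        = ∑ z, L' (e.symm x) (e.symm z) * L' (e.symm y) (e.symm z) :=
          Finset.sum_congr rfl fun z _ => hterm z
    _ = ∑ p, L' (e.symm x) p * L' (e.symm y) p := by
          rw [← Equiv.sum_comp e fun p => L' (e.symm x) (e.symm p) * L' (e.symm y) (e.symm p)]
          refine Finset.sum_congr rfl fun p _ => ?_
          rw [e.symm_apply_apply]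
    _ = (L' * L'ᵀ) (e.symm x) (e.symm y) := by
          rw [Matrix.mul_apply]
          refine Finset.sum_congr rfl fun p _ => ?_
          rw [Matrix.transpose_apply]
    _ = M (e.symm x) (e.symm y) := by rw [hL3]
    _ = Ψ x y := by rw [hMapp, e.apply_symm_apply, e.apply_symm_apply]
  · intro i j hprec hnot a b
    refine hL4 _ _ ?_
    show ¬ PadjL (((e (e.symm (i, a))).1 : ℕ) + 1) (((e (e.symm (j, b))).1 : ℕ) + 1)
    rw [e.apply_symm_apply, e.apply_symm_apply]
    dsimp only
    rintro (h | h | h | h | h)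
    · exact hprec.2 h.symm
    · exact hnot (Or.inl h)
    · exact hnot (Or.inr (by omega))
    · exact not_ndLe_of_val_lt (val_step (Nat.succ_pos _) (Nat.succ_pos _) (Or.inl h)) hprec.1
    · exact not_ndLe_of_val_lt (val_step (Nat.succ_pos _) (Nat.succ_pos _) (Or.inr h)) hprec.1
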